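/- For a nonzero vector $v\in\mathbb{R}^5$, the $4\times 5$ matrix with rows $(a,0,-1,0,0)$, $(0,b,0,0,-1)$, $(b,a,0,-2,0)$, $(v_1,v_2,v_3,v_4,v_5)$ has rank $4$ for all $(a,b)\in\mathbb{R}^2$ outside the zero set of some nonzero polynomial in $(a,b)$. Equivalently, the rank is $4$ unless both $v_1+v_3a+\tfrac12 v_4 b$ and $v_2+v_5b+\tfrac12 v_4 a$ vanish identically as polynomials in $(a,b)$, which is impossible for $v\neq 0$. -/

import Mathlib

open MvPolynomial Matrix

lemma rank_eq_four_of_minor {M : Matrix (Fin 4) (Fin 5) ℝ} (g : Fin 4 → Fin 5)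
    (h : (M.submatrix id g).det ≠ 0) : M.rank = 4 := by
  refine le_antisymm (by simpa using M.rank_le_card_height) ?_
  have hsub : M.submatrix id g = M * Matrix.of (fun k j => if g j = k then (1:ℝ) else 0) := by
    ext i j
    simp [Matrix.mul_apply, Matrix.submatrix_apply]
  have h4 : (M.submatrix id g).rank = 4 := by
    rw [Matrix.rank_of_isUnit _ ((Matrix.isUnit_iff_isUnit_det _).mpr h.isUnit)]
    simp
  calc (4:ℕ) = (M.submatrix id g).rank := h4.symm
    _ ≤ M.rank := by rw [hsub]; exact Matrix.rank_mul_le_left _ _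

lemma lin_ne_zero (c0 c1 c2 : ℝ) (h : c0 ≠ 0 ∨ c1 ≠ 0 ∨ c2 ≠ 0) :
    (C c0 + C c1 * X 0 + C c2 * X 1 : MvPolynomial (Fin 2) ℝ) ≠ 0 := by
  intro h0
  have e : ∀ a b : ℝ, c0 + c1 * a + c2 * b = 0 := by
    intro a b
    have := congrArg (MvPolynomial.eval ![a, b]) h0
    simpa using this
  have e1 := e 0 0
  have e2 := e 1 0
  have e3 := e 0 1
  rcases h with h | h | h <;> apply h <;> linarith

lemma lin_eval (c0 c1 c2 a b : ℝ) :
    MvPolynomial.eval ![a, b] (C c0 + C c1 * X 0 + C c2 * X 1) = c0 + c1 * a + c2 * b := by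
  simp

theorem stmt9 (v : Fin 5 → ℝ) (hv : v ≠ 0) :
    ∃ P : MvPolynomial (Fin 2) ℝ, P ≠ 0 ∧ ∀ a b : ℝ,
      MvPolynomial.eval ![a, b] P ≠ 0 →
      (Matrix.of ![![a, 0, -1, 0, 0], ![0, b, 0, 0, -1], ![b, a, 0, -2, 0],
        ![v 0, v 1, v 2, v 3, v 4]] : Matrix (Fin 4) (Fin 5) ℝ).rank = 4 := by
  by_cases hc : v 0 = 0 ∧ v 2 = 0 ∧ v 3 = 0
  · -- use columns 1,2,3,4 : det = -2 v1 - v3 a - 2 v4 b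
    refine ⟨C (-2 * v 1) + C (-(v 3)) * X 0 + C (-2 * v 4) * X 1, ?_, ?_⟩
    · apply lin_ne_zero
      have : v 1 ≠ 0 ∨ v 4 ≠ 0 := by
        by_contra hcon
        push_neg at hcon
        apply hv
        funext i
        fin_cases i <;> simp [hc.1, hc.2.1, hc.2.2, hcon.1, hcon.2]
      rcases this with h | h
      · exact Or.inl (mul_ne_zero (by norm_num) h)
      · exact Or.inr (Or.inr (mul_ne_zero (by norm_num) h))
    · intro a b hP
      apply rank_eq_four_of_minor ![1, 2, 3, 4]
      rw [lin_eval] at hP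
      have hdet : ((Matrix.of ![![a, 0, -1, 0, 0], ![0, b, 0, 0, -1], ![b, a, 0, -2, 0],
          ![v 0, v 1, v 2, v 3, v 4]] : Matrix (Fin 4) (Fin 5) ℝ).submatrix id ![1,2,3,4]).det
          = -2 * v 1 + -(v 3) * a + -2 * v 4 * b := by
        simp [Matrix.det_succ_row_zero, Fin.sum_univ_succ, Fin.succAbove]
        ring
      rw [hdet]; exact hP
  · refine ⟨C (-2 * v 0) + C (-2 * v 2) * X 0 + C (-(v 3)) * X 1, ?_, ?_⟩
    · apply lin_ne_zero
      push_neg at hc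
      by_cases h0 : v 0 = 0
      · by_cases h2 : v 2 = 0
        · right; right; simpa using hc h0 h2
        · right; left; simpa using mul_ne_zero (by norm_num : (-2:ℝ) ≠ 0) h2
      · left; simpa using mul_ne_zero (by norm_num : (-2:ℝ) ≠ 0) h0
    · intro a b hP
      apply rank_eq_four_of_minor ![0, 2, 3, 4]
      rw [lin_eval] at hP
      have hdet : ((Matrix.of ![![a, 0, -1, 0, 0], ![0, b, 0, 0, -1], ![b, a, 0, -2, 0],
          ![v 0, v 1, v 2, v 3, v 4]] : Matrix (Fin 4) (Fin 5) ℝ).submatrix id ![0,2,3,4]).det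
          = -2 * v 0 + -2 * v 2 * a + -(v 3) * b := by
        simp [Matrix.det_succ_row_zero, Fin.sum_univ_succ, Fin.succAbove]
        ring
      rw [hdet]; exact hP
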